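/- Under an M-optimal (or W-optimal) stable matching algorithm, any matching that is asymptotically stable under payoff-positive selection dynamics (i.e., admits a partial preimage closed under weakly better replies) is a stable matching with respect to the true preferences. -/

import Mathlib

open scoped Classical

/-- A marriage problem's (strict) preference profile, given by injective rank
functions over potential partners plus the option `none` of staying single
(lower rank = more preferred). -/
structure Pref (M W : Type) where
  mrank : M → Option W → ℕ
  wrank : W → Option M → ℕ
  minj : ∀ a x y, mrank a x = mrank a y → x = y
  winj : ∀ b x y, wrank b x = wrank b y → x = y

/-- A one-to-one matching between `M` and `W` (with `none` = single). -/
structure Matching (M W : Type) where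
  mu : M → Option W
  nu : W → Option M
  consistent : ∀ a b, mu a = some b ↔ nu b = some a

/-- No player strictly prefers being single to the assigned partner. -/
def IndivRational {M W : Type} (P : Pref M W) (μ : Matching M W) : Prop :=
  (∀ a, ¬ P.mrank a none < P.mrank a (μ.mu a)) ∧
  (∀ b, ¬ P.wrank b none < P.wrank b (μ.nu b))

/-- The pair `(a, b)` blocks `μ`. -/
def Blocks {M W : Type} (P : Pref M W) (μ : Matching M W) (a : M) (b : W) : Prop :=
  P.mrank a (some b) < P.mrank a (μ.mu a) ∧ P.wrank b (some a) < P.wrank b (μ.nu b)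

/-- Stability: individual rationality together with absence of blocking pairs. -/
def StableMatching {M W : Type} (P : Pref M W) (μ : Matching M W) : Prop :=
  IndivRational P μ ∧ ∀ a b, ¬ Blocks P μ a b

noncomputable section

variable {M W : Type} [Fintype M] [Fintype W]

/-- `b` is acceptable to man `a`. -/
def mAcc (P : Pref M W) (a : M) (b : W) : Prop := P.mrank a (some b) < P.mrank a none

/-- `a` is acceptable to woman `b`. -/
def wAcc (P : Pref M W) (b : W) (a : M) : Prop := P.wrank b (some a) < P.wrank b none

/-- The state of the man-proposing deferred acceptance algorithm:
for each man, the index of the next woman on his list to propose to,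
and for each woman, the proposer she currently (tentatively) holds. -/
structure DAState (M W : Type) where
  next : M → ℕ
  hold : W → Option M

/-- A man is free if no woman currently holds him. -/
def IsFree (s : DAState M W) (a : M) : Prop := ∀ b, s.hold b ≠ some a

/-- The `k`-th woman (0-indexed) on man `a`'s list of acceptable women,
in decreasing order of preference. -/
def target (P : Pref M W) (a : M) (k : ℕ) : Option W :=
  if h : ∃ b : W, mAcc P a b ∧
      (Finset.univ.filter fun b' => mAcc P a b' ∧
        P.mrank a (some b') < P.mrank a (some b)).card = k
  then some h.choose else none

/-- Woman `b`'s most preferred acceptable man in the finite set `c` (if any). -/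
def best (P : Pref M W) (b : W) (c : Finset M) : Option M :=
  if h : ∃ a ∈ c, wAcc P b a ∧ ∀ a' ∈ c, wAcc P b a' → P.wrank b (some a) ≤ P.wrank b (some a')
  then some h.choose else none

/-- One round of the man-proposing deferred acceptance algorithm: every free
man proposes to the next woman on his list; every woman holds the best
acceptable man among her current proposers and the man she held before. -/
def daStep (P : Pref M W) (s : DAState M W) : DAState M W where
  next a := if IsFree s a ∧ (target P a (s.next a)).isSome then s.next a + 1 else s.next a
  hold b := best P b
    ((Finset.univ.filter fun a => IsFree s a ∧ target P a (s.next a) = some b) ∪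
      (s.hold b).toFinset)

/-- The algorithm terminates when no free man has anyone left to propose to. -/
def Finished (P : Pref M W) (s : DAState M W) : Prop :=
  ∀ a, IsFree s a → target P a (s.next a) = none

/-- Iterate the deferred acceptance rounds (with fuel). -/
def daRun (P : Pref M W) : ℕ → DAState M W → DAState M W
  | 0, s => s
  | n + 1, s => if Finished P s then s else daRun P n (daStep P s)

/-- The initial state: every man is free and about to propose to his favorite. -/
def daInit : DAState M W := ⟨fun _ => 0, fun _ => none⟩

/-- The final state of the man-proposing deferred acceptance algorithm
(the fuel is enough for the algorithm to have terminated). -/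
def daFinal (P : Pref M W) : DAState M W :=
  daRun P (Fintype.card M * (Fintype.card W + 1) + 1) daInit

/-- The partner of woman `b` under the man-proposing DA matching. -/
def daNu (P : Pref M W) (b : W) : Option M := (daFinal P).hold b

/-- The partner of man `a` under the man-proposing DA matching. -/
def daMu (P : Pref M W) (a : M) : Option W :=
  if h : ∃ b, (daFinal P).hold b = some a then some h.choose else none

/-- Man `a` proposes to woman `b` at some point during the run of the
man-proposing deferred acceptance algorithm. -/
def Proposes (P : Pref M W) (a : M) (b : W) : Prop :=
  ∃ n, IsFree (daRun P n daInit) a ∧ target P a ((daRun P n daInit).next a) = some b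

end

noncomputable section RevelationGame

variable (M W : Type) [Fintype M] [Fintype W] [DecidableEq M] [DecidableEq W]

/-- Pure strategies in the preference revelation game: a player submits a
strict ranking of the opposite side together with the option of being single. -/
abbrev Strat : M ⊕ W → Type := fun i =>
  match i with
  | Sum.inl _ => Option W ≃ Fin (Fintype.card W + 1)
  | Sum.inr _ => Option M ≃ Fin (Fintype.card M + 1)

instance instStratFintype : ∀ i : M ⊕ W, Fintype (Strat M W i)
  | Sum.inl _ => inferInstanceAs (Fintype (Option W ≃ Fin (Fintype.card W + 1)))
  | Sum.inr _ => inferInstanceAs (Fintype (Option M ≃ Fin (Fintype.card M + 1)))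

variable {M W}

/-- The preference profile induced by a report profile. -/
def reportPref (r : ∀ i : M ⊕ W, Strat M W i) : Pref M W where
  mrank a o := ((r (Sum.inl a)) o : ℕ)
  wrank b o := ((r (Sum.inr b)) o : ℕ)
  minj a _ _ h := (r (Sum.inl a)).injective (Fin.val_injective h)
  winj b _ _ h := (r (Sum.inr b)).injective (Fin.val_injective h)

/-- A mixed strategy profile: one probability distribution per player. -/
def IsMixed (x : ∀ i : M ⊕ W, Strat M W i → ℝ) : Prop :=
  ∀ i, (∀ h, 0 ≤ x i h) ∧ ∑ h, x i h = 1

/-- The mixed profile `x` is supported on the product set `H`. -/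
def SupportedOn (x : ∀ i : M ⊕ W, Strat M W i → ℝ)
    (H : ∀ i : M ⊕ W, Set (Strat M W i)) : Prop :=
  ∀ i h, x i h ≠ 0 → h ∈ H i

/-- Expected payoff to player `i` under a mixed strategy profile `x`. -/
def expPay (π : ∀ _ : M ⊕ W, (∀ j : M ⊕ W, Strat M W j) → ℝ) (i : M ⊕ W)
    (x : ∀ j : M ⊕ W, Strat M W j → ℝ) : ℝ :=
  ∑ s : ∀ j : M ⊕ W, Strat M W j, (∏ j, x j (s j)) * π i s

/-- The Dirac (pure) mixed strategy on `h`. -/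
def delta {i : M ⊕ W} (h : Strat M W i) : Strat M W i → ℝ :=
  fun t => if t = h then 1 else 0

/-- `H` is closed under weakly better replies: any pure strategy of a player
that earns at least the average payoff against some mixed profile supported on
`H` already belongs to the player's component of `H`. -/
def CUWBR (π : ∀ _ : M ⊕ W, (∀ j : M ⊕ W, Strat M W j) → ℝ)
    (H : ∀ i : M ⊕ W, Set (Strat M W i)) : Prop :=
  ∀ (i : M ⊕ W) (h : Strat M W i),
    (∃ x, IsMixed x ∧ SupportedOn x H ∧
      expPay π i x ≤ expPay π i (Function.update x i (delta h))) → h ∈ H i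

/-- Payoffs of the preference revelation game induced by the man-proposing
deferred acceptance algorithm: each player's payoff is a strictly decreasing
function of the true-preference rank of the partner assigned by DA run on the
reported profile. -/
def daPayoff (P : Pref M W) (um : M → ℕ → ℝ) (uw : W → ℕ → ℝ) :
    ∀ _ : M ⊕ W, (∀ j : M ⊕ W, Strat M W j) → ℝ := fun i r =>
  match i with
  | Sum.inl a => um a (P.mrank a (daMu (reportPref r) a))
  | Sum.inr b => uw b (P.wrank b (daNu (reportPref r) b))

end RevelationGame

/-- `μ` is the M-optimal stable matching for `P`. -/
def IsMOptimalStable {M W : Type} (P : Pref M W) (μ : Matching M W) : Prop :=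
  StableMatching P μ ∧
    ∀ ν, StableMatching P ν → ∀ a, P.mrank a (μ.mu a) ≤ P.mrank a (ν.mu a)

/-- `μ` is the W-optimal stable matching for `P`. -/
def IsWOptimalStable {M W : Type} (P : Pref M W) (μ : Matching M W) : Prop :=
  StableMatching P μ ∧
    ∀ ν, StableMatching P ν → ∀ b, P.wrank b (μ.nu b) ≤ P.wrank b (ν.nu b)

/-- Payoffs of the preference revelation game induced by an arbitrary matching
algorithm `Γ`. -/
noncomputable def algPayoff {M W : Type} [Fintype M] [Fintype W]
    (Γ : (∀ i : M ⊕ W, Strat M W i) → Matching M W)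
    (P : Pref M W) (um : M → ℕ → ℝ) (uw : W → ℕ → ℝ) :
    ∀ _ : M ⊕ W, (∀ j : M ⊕ W, Strat M W j) → ℝ := fun i r =>
  match i with
  | Sum.inl a => um a (P.mrank a ((Γ r).mu a))
  | Sum.inr b => uw b (P.wrank b ((Γ r).nu b))

section AuxEquiv

/-- An equivalence sending a prescribed element to rank `0`. -/
lemma exists_e1 {T : Type} [Fintype T] [DecidableEq T] (x : Option T) :
    ∃ e : Option T ≃ Fin (Fintype.card T + 1), (e x : ℕ) = 0 := by
  let e₀ : Option T ≃ Fin (Fintype.card T + 1) :=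
    Fintype.equivFinOfCardEq Fintype.card_option
  refine ⟨e₀.trans (Equiv.swap (e₀ x) ⟨0, Nat.succ_pos _⟩), ?_⟩
  simp [Equiv.swap_apply_left]

/-- An equivalence realizing the ranking `x ≻ y ≻ rest`. -/
lemma exists_e2 {T : Type} [Fintype T] [DecidableEq T] {x y : Option T} (hxy : x ≠ y) :
    ∃ e : Option T ≃ Fin (Fintype.card T + 1),
      (e x : ℕ) = 0 ∧ (e y : ℕ) = 1 ∧ ∀ z, z ≠ x → z ≠ y → 1 < (e z : ℕ) := by
  have h1 : 1 < Fintype.card T + 1 := by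
    rw [← Fintype.card_option]; exact Fintype.one_lt_card_iff.mpr ⟨x, y, hxy⟩
  obtain ⟨e₁, he₁⟩ := exists_e1 x
  set f := e₁.trans (Equiv.swap (e₁ y) ⟨1, h1⟩) with hf
  have hx0 : (f x : ℕ) = 0 := by
    have hne1 : e₁ x ≠ e₁ y := fun h => hxy (e₁.injective h)
    have hne2 : e₁ x ≠ ⟨1, h1⟩ := by
      intro h; rw [h] at he₁; simp at he₁
    show ((Equiv.swap (e₁ y) ⟨1, h1⟩) (e₁ x) : ℕ) = 0
    rw [Equiv.swap_apply_of_ne_of_ne hne1 hne2]; exact he₁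
  have hy1 : (f y : ℕ) = 1 := by
    show ((Equiv.swap (e₁ y) ⟨1, h1⟩) (e₁ y) : ℕ) = 1
    rw [Equiv.swap_apply_left]
  refine ⟨f, hx0, hy1, fun z hzx hzy => ?_⟩
  have h0 : (f z : ℕ) ≠ 0 := fun h =>
    hzx (f.injective (Fin.val_injective (by rw [h, hx0])))
  have h1' : (f z : ℕ) ≠ 1 := fun h =>
    hzy (f.injective (Fin.val_injective (by rw [h, hy1])))
  omega

/-- An equivalence realizing the ranking `x ≻ y ≻ none ≻ rest`. -/
lemma exists_e3 {T : Type} [Fintype T] [DecidableEq T] {x y : Option T} (hxy : x ≠ y)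
    (hx : x ≠ none) (hy : y ≠ none) :
    ∃ e : Option T ≃ Fin (Fintype.card T + 1),
      (e x : ℕ) = 0 ∧ (e y : ℕ) = 1 ∧ (e none : ℕ) = 2 ∧
        ∀ z, z ≠ x → z ≠ y → z ≠ none → 2 < (e z : ℕ) := by
  obtain ⟨x', rfl⟩ := Option.ne_none_iff_exists'.mp hx
  obtain ⟨y', rfl⟩ := Option.ne_none_iff_exists'.mp hy
  have h2 : 2 < Fintype.card T + 1 := by
    have : 1 < Fintype.card T :=
      Fintype.one_lt_card_iff.mpr ⟨x', y', fun h => hxy (by rw [h])⟩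
    omega
  obtain ⟨e₂, hx0, hy1, hrest⟩ := exists_e2 hxy
  set f := e₂.trans (Equiv.swap (e₂ none) ⟨2, h2⟩) with hf
  have hvx : (f (some x') : ℕ) = 0 := by
    have hne1 : e₂ (some x') ≠ e₂ none := fun h => hx (e₂.injective h)
    have hne2 : e₂ (some x') ≠ ⟨2, h2⟩ := by
      intro h; rw [h] at hx0; simp at hx0
    show ((Equiv.swap (e₂ none) ⟨2, h2⟩) (e₂ (some x')) : ℕ) = 0
    rw [Equiv.swap_apply_of_ne_of_ne hne1 hne2]; exact hx0
  have hvy : (f (some y') : ℕ) = 1 := by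
    have hne1 : e₂ (some y') ≠ e₂ none := fun h => hy (e₂.injective h)
    have hne2 : e₂ (some y') ≠ ⟨2, h2⟩ := by
      intro h; rw [h] at hy1; simp at hy1
    show ((Equiv.swap (e₂ none) ⟨2, h2⟩) (e₂ (some y')) : ℕ) = 1
    rw [Equiv.swap_apply_of_ne_of_ne hne1 hne2]; exact hy1
  have hvn : (f none : ℕ) = 2 := by
    show ((Equiv.swap (e₂ none) ⟨2, h2⟩) (e₂ none) : ℕ) = 2
    rw [Equiv.swap_apply_left]
  refine ⟨f, hvx, hvy, hvn, fun z hzx hzy hzn => ?_⟩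
  have h0 : (f z : ℕ) ≠ 0 := fun h =>
    hzx (f.injective (Fin.val_injective (by rw [h, hvx])))
  have h1' : (f z : ℕ) ≠ 1 := fun h =>
    hzy (f.injective (Fin.val_injective (by rw [h, hvy])))
  have h2' : (f z : ℕ) ≠ 2 := fun h =>
    hzn (f.injective (Fin.val_injective (by rw [h, hvn])))
  omega

end AuxEquiv

section AuxGame

variable {M W : Type} [Fintype M] [Fintype W] [DecidableEq M] [DecidableEq W]

lemma expPay_delta (π : ∀ _ : M ⊕ W, (∀ j : M ⊕ W, Strat M W j) → ℝ) (i : M ⊕ W)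
    (r : ∀ j : M ⊕ W, Strat M W j) :
    expPay π i (fun j => delta (r j)) = π i r := by
  unfold expPay
  rw [Finset.sum_eq_single_of_mem r (Finset.mem_univ r)]
  · have : ∀ j : M ⊕ W, delta (r j) (r j) = 1 := fun j => if_pos rfl
    rw [Finset.prod_congr rfl (fun j _ => this j)]
    simp
  · intro s _ hs
    have hex : ∃ j, s j ≠ r j := by
      by_contra hc; push_neg at hc; exact hs (funext hc)
    obtain ⟨j, hj⟩ := hex
    have hz : delta (r j) (s j) = 0 := if_neg hj
    rw [Finset.prod_eq_zero (Finset.mem_univ j) hz, zero_mul]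

lemma key_lemma {π : ∀ _ : M ⊕ W, (∀ j : M ⊕ W, Strat M W j) → ℝ}
    {H : ∀ i : M ⊕ W, Set (Strat M W i)}
    (hcl : CUWBR π H) {r : ∀ i : M ⊕ W, Strat M W i} (hr : ∀ i, r i ∈ H i)
    {i : M ⊕ W} {h : Strat M W i}
    (hp : π i r ≤ π i (Function.update r i h)) : h ∈ H i := by
  apply hcl i h
  refine ⟨fun j => delta (r j), ?_, ?_, ?_⟩
  · intro j
    constructor
    · intro t
      show (0:ℝ) ≤ delta (r j) t
      have : delta (r j) t = if t = r j then 1 else 0 := rfl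
      rw [this]
      split <;> norm_num
    · show (∑ t, delta (r j) t) = 1
      have : ∀ t, delta (r j) t = if t = r j then 1 else 0 := fun _ => rfl
      simp only [this]
      simp
  · intro j t ht
    have : t = r j := by
      by_contra hne
      exact ht (if_neg hne)
    exact this ▸ hr j
  · have hupd : Function.update (fun j => delta (r j)) i (delta h)
        = fun j => delta (Function.update r i h j) := by
      funext j
      by_cases hj : j = i
      · subst hj; simp
      · simp [Function.update_of_ne hj]
    rw [expPay_delta, hupd, expPay_delta]
    exact hp

lemma update_mem {H : ∀ i : M ⊕ W, Set (Strat M W i)} {r : ∀ i : M ⊕ W, Strat M W i}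
    (hr : ∀ i, r i ∈ H i) {i : M ⊕ W} {h : Strat M W i} (hh : h ∈ H i) :
    ∀ j, Function.update r i h j ∈ H j := by
  intro j
  by_cases hj : j = i
  · subst hj; rw [Function.update_self]; exact hh
  · rw [Function.update_of_ne hj]; exact hr j

end AuxGame

section AuxStable

/-- Swap the two sides of a preference profile. -/
def Pref.flip {M W : Type} (P : Pref M W) : Pref W M :=
  ⟨P.wrank, P.mrank, P.winj, P.minj⟩

/-- Swap the two sides of a matching. -/
def Matching.flip {M W : Type} (μ : Matching M W) : Matching W M :=
  ⟨μ.nu, μ.mu, fun b a => ⟨fun h => (μ.consistent a b).mpr h, fun h => (μ.consistent a b).mp h⟩⟩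

lemma StableMatching.flip {M W : Type} {P : Pref M W} {μ : Matching M W}
    (h : StableMatching P μ) : StableMatching P.flip μ.flip :=
  ⟨⟨h.1.2, h.1.1⟩, fun b a hb => h.2 a b ⟨hb.2, hb.1⟩⟩

/-- The lone-wolf principle in the form needed here: if `ν` is a stable matching
in which every man is weakly better off than in the stable matching `μ`, then no
woman matched under `μ` can be single under `ν`. -/
lemma lonewolf {M W : Type} [Fintype W] {P : Pref M W} {μ ν : Matching M W}
    (hμ : StableMatching P μ) (hν : StableMatching P ν)
    (hopt : ∀ c, P.mrank c (ν.mu c) ≤ P.mrank c (μ.mu c))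
    {b : W} {a₀ : M} (hb : μ.nu b = some a₀) (hbν : ν.nu b = none) : False := by
  classical
  -- invariant along the chain
  set Q : W → Prop := fun w => ∃ c : M, μ.nu w = some c ∧
    P.wrank w (some c) < P.wrank w (ν.nu w) with hQ
  -- the chain step
  have step : ∀ w, Q w → ∃ w', Q w' ∧ ν.nu w' = μ.nu w := by
    rintro w ⟨c, hw1, hw2⟩
    have hμmu : μ.mu c = some w := (μ.consistent c w).mpr hw1
    have hne : ν.mu c ≠ some w := by
      intro h
      have : ν.nu w = some c := (ν.consistent c w).mp h
      rw [this] at hw2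
      exact lt_irrefl _ hw2
    have hlt : P.mrank c (ν.mu c) < P.mrank c (some w) := by
      have h1 := hopt c
      rw [hμmu] at h1
      rcases lt_or_eq_of_le h1 with h | h
      · exact h
      · exact absurd (P.minj c _ _ h) hne
    have hsome : ν.mu c ≠ none := by
      intro h
      have hir := hμ.1.1 c
      rw [hμmu] at hir
      rw [h] at hlt
      exact hir hlt
    obtain ⟨w', hw'⟩ := Option.ne_none_iff_exists'.mp hsome
    have hνnu : ν.nu w' = some c := (ν.consistent c w').mp hw'
    have hnb := hμ.2 c w'
    rw [Blocks] at hnb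
    push_neg at hnb
    have hble : P.wrank w' (μ.nu w') ≤ P.wrank w' (some c) :=
      hnb (by rw [hμmu, ← hw']; exact hlt)
    have hne2 : μ.nu w' ≠ some c := by
      intro h
      have : μ.mu c = some w' := (μ.consistent c w').mpr h
      rw [hμmu] at this
      have : w = w' := by injection this
      rw [← this] at hw'
      exact hne hw'
    have hlt2 : P.wrank w' (μ.nu w') < P.wrank w' (some c) := by
      rcases lt_or_eq_of_le hble with h | h
      · exact h
      · exact absurd (P.winj w' _ _ h) hne2
    have hsome2 : μ.nu w' ≠ none := by
      intro h
      have hir := hν.1.2 w'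
      rw [hνnu] at hir
      rw [h] at hlt2
      exact hir hlt2
    obtain ⟨c', hc'⟩ := Option.ne_none_iff_exists'.mp hsome2
    refine ⟨w', ⟨c', hc', ?_⟩, by rw [hνnu, hw1]⟩
    rw [← hc', hνnu]
    exact hlt2
  -- base point
  have Qb : Q b := by
    refine ⟨a₀, hb, ?_⟩
    have hir := hμ.1.2 b
    rw [hb] at hir
    have hle : P.wrank b (some a₀) ≤ P.wrank b none := le_of_not_gt hir
    rw [hbν]
    rcases lt_or_eq_of_le hle with h | h
    · exact h
    · exact absurd (P.winj b _ _ h) (by simp)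
  -- the chain
  let g : ℕ → {w : W // Q w} := fun n =>
    Nat.rec ⟨b, Qb⟩ (fun _ p => ⟨(step p.1 p.2).choose, (step p.1 p.2).choose_spec.1⟩) n
  have hg0 : (g 0).1 = b := rfl
  have hlink : ∀ n, ν.nu (g (n + 1)).1 = μ.nu (g n).1 := fun n =>
    (step (g n).1 (g n).2).choose_spec.2
  have hinj : ∀ m n, (g m).1 = (g n).1 → m = n := by
    intro m
    induction m with
    | zero =>
      intro n h
      cases n with
      | zero => rfl
      | succ k =>
        exfalso
        obtain ⟨c, hc, _⟩ := (g k).2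
        have := hlink k
        rw [← h, hg0, hbν] at this
        rw [hc] at this
        exact Option.some_ne_none c this.symm
    | succ m ih =>
      intro n h
      cases n with
      | zero =>
        exfalso
        obtain ⟨c, hc, _⟩ := (g m).2
        have := hlink m
        rw [h, hg0, hbν] at this
        rw [hc] at this
        exact Option.some_ne_none c this.symm
      | succ k =>
        have hν : ν.nu (g (m + 1)).1 = ν.nu (g (k + 1)).1 := by rw [h]
        rw [hlink m, hlink k] at hν
        obtain ⟨c, hc, _⟩ := (g m).2
        obtain ⟨c', hc', _⟩ := (g k).2
        rw [hc, hc'] at hν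
        have hcc : c = c' := by injection hν
        have h1 : μ.mu c = some (g m).1 := (μ.consistent c (g m).1).mpr hc
        have h2 : μ.mu c' = some (g k).1 := (μ.consistent c' (g k).1).mpr hc'
        rw [hcc, h2] at h1
        have : (g k).1 = (g m).1 := by injection h1
        rw [ih k this.symm]
  obtain ⟨m, n, hmn, heq⟩ := Finite.exists_ne_map_eq_of_infinite (fun n => (g n).1)
  exact hmn (hinj m n heq)

end AuxStable

section MainAux

variable {M W : Type} [Fintype M] [Fintype W] [DecidableEq M] [DecidableEq W]

lemma eq_of_val_eq {T : Type} {n : ℕ} (e : Option T ≃ Fin n) {z z' : Option T}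
    (h : (e z : ℕ) = (e z' : ℕ)) : z = z' :=
  e.injective (Fin.val_injective h)

lemma rank_upd_a_self (r : ∀ i : M ⊕ W, Strat M W i) (a : M) (h : Strat M W (Sum.inl a))
    (o : Option W) :
    (reportPref (Function.update r (Sum.inl a) h)).mrank a o = (h o : ℕ) := by
  show ((Function.update r (Sum.inl a) h (Sum.inl a)) o : ℕ) = (h o : ℕ)
  rw [Function.update_self]

lemma rank_upd_a_otherm (r : ∀ i : M ⊕ W, Strat M W i) {a a' : M} (hne : a' ≠ a)
    (h : Strat M W (Sum.inl a)) (o : Option W) :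
    (reportPref (Function.update r (Sum.inl a) h)).mrank a' o = (reportPref r).mrank a' o := by
  show ((Function.update r (Sum.inl a) h (Sum.inl a')) o : ℕ) = _
  rw [Function.update_of_ne (by simp [hne])]
  rfl

lemma rank_upd_a_w (r : ∀ i : M ⊕ W, Strat M W i) (a : M) (h : Strat M W (Sum.inl a))
    (b : W) (o : Option M) :
    (reportPref (Function.update r (Sum.inl a) h)).wrank b o = (reportPref r).wrank b o := by
  show ((Function.update r (Sum.inl a) h (Sum.inr b)) o : ℕ) = _
  rw [Function.update_of_ne (by simp)]
  rfl

lemma rank_upd_b_self (r : ∀ i : M ⊕ W, Strat M W i) (b : W) (h : Strat M W (Sum.inr b))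
    (o : Option M) :
    (reportPref (Function.update r (Sum.inr b) h)).wrank b o = (h o : ℕ) := by
  show ((Function.update r (Sum.inr b) h (Sum.inr b)) o : ℕ) = (h o : ℕ)
  rw [Function.update_self]

lemma rank_upd_b_otherw (r : ∀ i : M ⊕ W, Strat M W i) {b b' : W} (hne : b' ≠ b)
    (h : Strat M W (Sum.inr b)) (o : Option M) :
    (reportPref (Function.update r (Sum.inr b) h)).wrank b' o = (reportPref r).wrank b' o := by
  show ((Function.update r (Sum.inr b) h (Sum.inr b')) o : ℕ) = _
  rw [Function.update_of_ne (by simp [hne])]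
  rfl

lemma rank_upd_b_m (r : ∀ i : M ⊕ W, Strat M W i) (b : W) (h : Strat M W (Sum.inr b))
    (a : M) (o : Option W) :
    (reportPref (Function.update r (Sum.inr b) h)).mrank a o = (reportPref r).mrank a o := by
  show ((Function.update r (Sum.inr b) h (Sum.inl a)) o : ℕ) = _
  rw [Function.update_of_ne (by simp)]
  rfl

lemma pay_m (Γ : (∀ i : M ⊕ W, Strat M W i) → Matching M W) (P : Pref M W)
    (um : M → ℕ → ℝ) (uw : W → ℕ → ℝ) (a : M) (r : ∀ i : M ⊕ W, Strat M W i) :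
    algPayoff Γ P um uw (Sum.inl a) r = um a (P.mrank a ((Γ r).mu a)) := rfl

lemma pay_w (Γ : (∀ i : M ⊕ W, Strat M W i) → Matching M W) (P : Pref M W)
    (um : M → ℕ → ℝ) (uw : W → ℕ → ℝ) (b : W) (r : ∀ i : M ⊕ W, Strat M W i) :
    algPayoff Γ P um uw (Sum.inr b) r = uw b (P.wrank b ((Γ r).nu b)) := rfl

/-- A canonical "x first, y second, rest unacceptable" report. -/
lemma exists_eDev {T : Type} [Fintype T] [DecidableEq T] {x y : Option T} (hxy : x ≠ y)
    (hx : x ≠ none) :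
    ∃ e : Option T ≃ Fin (Fintype.card T + 1),
      (e x : ℕ) = 0 ∧ (e y : ℕ) = 1 ∧ 1 ≤ (e none : ℕ) ∧
      (y = none → (e none : ℕ) = 1) ∧ (y ≠ none → (e none : ℕ) = 2) ∧
      ∀ z, (e z : ℕ) ≤ (e none : ℕ) → z = x ∨ z = y ∨ z = none := by
  by_cases hy : y = none
  · subst hy
    obtain ⟨e, h0, h1, hF⟩ := exists_e2 hxy
    refine ⟨e, h0, h1, by rw [h1], fun _ => h1, fun h => absurd rfl h, fun z hz => ?_⟩
    by_cases hzx : z = x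
    · exact Or.inl hzx
    · by_cases hzn : z = none
      · exact Or.inr (Or.inr hzn)
      · exact absurd hz (by rw [h1]; exact Nat.not_le_of_lt (hF z hzx hzn))
  · obtain ⟨e, h0, h1, hN, hF⟩ := exists_e3 hxy hx hy
    refine ⟨e, h0, h1, by rw [hN]; omega, fun h => absurd h hy, fun _ => hN, fun z hz => ?_⟩
    by_cases hzx : z = x
    · exact Or.inl hzx
    · by_cases hzy : z = y
      · exact Or.inr (Or.inl hzy)
      · by_cases hzn : z = none
        · exact Or.inr (Or.inr hzn)
        · exact absurd hz (by rw [hN]; exact Nat.not_le_of_lt (hF z hzx hzy hzn))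

lemma stable_upd_a {r0 : ∀ i : M ⊕ W, Strat M W i} {μ : Matching M W}
    (hst0 : StableMatching (reportPref r0) μ)
    {a : M} {h : Strat M W (Sum.inl a)}
    (hIR : ¬ ((h none : ℕ) < (h (μ.mu a) : ℕ)))
    (hblk : ∀ d : W, ((h (some d) : ℕ) < (h (μ.mu a) : ℕ)) →
      ¬ ((reportPref r0).wrank d (some a) < (reportPref r0).wrank d (μ.nu d))) :
    StableMatching (reportPref (Function.update r0 (Sum.inl a) h)) μ := by
  refine ⟨⟨fun c => ?_, fun d => ?_⟩, fun c d => ?_⟩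
  · by_cases hc : c = a
    · subst hc
      rw [rank_upd_a_self, rank_upd_a_self]
      exact hIR
    · rw [rank_upd_a_otherm r0 hc, rank_upd_a_otherm r0 hc]
      exact hst0.1.1 c
  · rw [rank_upd_a_w, rank_upd_a_w]
    exact hst0.1.2 d
  · rintro ⟨u, v⟩
    rw [rank_upd_a_w] at v
    by_cases hc : c = a
    · subst hc
      rw [rank_upd_a_self, rank_upd_a_self] at u
      exact hblk d u v
    · rw [rank_upd_a_otherm r0 hc, rank_upd_a_otherm r0 hc] at u
      exact hst0.2 c d ⟨u, v⟩

lemma stable_upd_b {r0 : ∀ i : M ⊕ W, Strat M W i} {μ : Matching M W}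
    (hst0 : StableMatching (reportPref r0) μ)
    {b : W} {h : Strat M W (Sum.inr b)}
    (hIR : ¬ ((h none : ℕ) < (h (μ.nu b) : ℕ)))
    (hblk : ∀ c : M, ((h (some c) : ℕ) < (h (μ.nu b) : ℕ)) →
      ¬ ((reportPref r0).mrank c (some b) < (reportPref r0).mrank c (μ.mu c))) :
    StableMatching (reportPref (Function.update r0 (Sum.inr b) h)) μ := by
  refine ⟨⟨fun c => ?_, fun d => ?_⟩, fun c d => ?_⟩
  · rw [rank_upd_b_m, rank_upd_b_m]
    exact hst0.1.1 c
  · by_cases hd : d = b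
    · subst hd
      rw [rank_upd_b_self, rank_upd_b_self]
      exact hIR
    · rw [rank_upd_b_otherw r0 hd, rank_upd_b_otherw r0 hd]
      exact hst0.1.2 d
  · rintro ⟨u, v⟩
    rw [rank_upd_b_m] at u
    by_cases hd : d = b
    · subst hd
      rw [rank_upd_b_self, rank_upd_b_self] at v
      exact hblk c v u
    · rw [rank_upd_b_otherw r0 hd, rank_upd_b_otherw r0 hd] at v
      exact hst0.2 c d ⟨u, v⟩

lemma finalStep_a_first {P : Pref M W} {um : M → ℕ → ℝ} {uw : W → ℕ → ℝ}
    {Γ : (∀ i : M ⊕ W, Strat M W i) → Matching M W}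
    {H : ∀ i : M ⊕ W, Set (Strat M W i)} {μ : Matching M W}
    (hstab : ∀ r, StableMatching (reportPref r) (Γ r))
    (hpp : ∀ r : ∀ i : M ⊕ W, Strat M W i, (∀ i, r i ∈ H i) → Γ r = μ)
    (hcl : CUWBR (algPayoff Γ P um uw) H)
    (huw : ∀ b x y, x < y → uw b y < uw b x)
    {r1 : ∀ i : M ⊕ W, Strat M W i} (hr1 : ∀ i, r1 i ∈ H i) {a : M} {b : W}
    (h2 : P.wrank b (some a) < P.wrank b (μ.nu b))
    (h0 : (reportPref r1).mrank a (some b) = 0) : False := by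
  obtain ⟨eb, heb⟩ := exists_e1 (some a : Option M)
  set r2 := Function.update r1 (Sum.inr b) eb with hr2
  have hst2 := hstab r2
  have hμ1 : Γ r1 = μ := hpp r1 hr1
  by_cases hm : (Γ r2).nu b = some a
  · have hkey : eb ∈ H (Sum.inr b) := by
      apply key_lemma hcl hr1
      rw [pay_w, pay_w, ← hr2, hμ1, hm]
      exact le_of_lt (huw b _ _ h2)
    have hμ2 : Γ r2 = μ := hpp r2 (update_mem hr1 hkey)
    rw [hμ2] at hm
    rw [hm] at h2
    exact lt_irrefl _ h2
  · apply hst2.2 a b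
    have hmw : (reportPref r2).wrank b (some a) = 0 := by
      rw [hr2, rank_upd_b_self]; exact heb
    constructor
    · have hab : (reportPref r2).mrank a (some b) = 0 := by
        rw [hr2, rank_upd_b_m]; exact h0
      have hne : (Γ r2).mu a ≠ some b := fun hh => hm (((Γ r2).consistent a b).mp hh)
      have hnz : (reportPref r2).mrank a ((Γ r2).mu a) ≠ 0 := by
        intro hz
        exact hne ((reportPref r2).minj a _ _ (by rw [hz, hab]))
      rw [hab]
      exact Nat.pos_of_ne_zero hnz
    · have hnz : (reportPref r2).wrank b ((Γ r2).nu b) ≠ 0 := by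
        intro hz
        exact hm ((reportPref r2).winj b _ _ (by rw [hz, hmw]))
      rw [hmw]
      exact Nat.pos_of_ne_zero hnz

lemma finalStep_b_first {P : Pref M W} {um : M → ℕ → ℝ} {uw : W → ℕ → ℝ}
    {Γ : (∀ i : M ⊕ W, Strat M W i) → Matching M W}
    {H : ∀ i : M ⊕ W, Set (Strat M W i)} {μ : Matching M W}
    (hstab : ∀ r, StableMatching (reportPref r) (Γ r))
    (hpp : ∀ r : ∀ i : M ⊕ W, Strat M W i, (∀ i, r i ∈ H i) → Γ r = μ)
    (hcl : CUWBR (algPayoff Γ P um uw) H)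
    (hum : ∀ a x y, x < y → um a y < um a x)
    {r1 : ∀ i : M ⊕ W, Strat M W i} (hr1 : ∀ i, r1 i ∈ H i) {a : M} {b : W}
    (h1 : P.mrank a (some b) < P.mrank a (μ.mu a))
    (h0 : (reportPref r1).wrank b (some a) = 0) : False := by
  obtain ⟨ea, hea⟩ := exists_e1 (some b : Option W)
  set r2 := Function.update r1 (Sum.inl a) ea with hr2
  have hst2 := hstab r2
  have hμ1 : Γ r1 = μ := hpp r1 hr1
  by_cases hm : (Γ r2).mu a = some b
  · have hkey : ea ∈ H (Sum.inl a) := by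
      apply key_lemma hcl hr1
      rw [pay_m, pay_m, ← hr2, hμ1, hm]
      exact le_of_lt (hum a _ _ h1)
    have hμ2 : Γ r2 = μ := hpp r2 (update_mem hr1 hkey)
    rw [hμ2] at hm
    rw [hm] at h1
    exact lt_irrefl _ h1
  · apply hst2.2 a b
    have hma : (reportPref r2).mrank a (some b) = 0 := by
      rw [hr2, rank_upd_a_self]; exact hea
    constructor
    · have hnz : (reportPref r2).mrank a ((Γ r2).mu a) ≠ 0 := by
        intro hz
        exact hm ((reportPref r2).minj a _ _ (by rw [hz, hma]))
      rw [hma]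
      exact Nat.pos_of_ne_zero hnz
    · have hwb : (reportPref r2).wrank b (some a) = 0 := by
        rw [hr2, rank_upd_a_w]; exact h0
      have hne : (Γ r2).nu b ≠ some a := fun hh => hm (((Γ r2).consistent a b).mpr hh)
      have hnz : (reportPref r2).wrank b ((Γ r2).nu b) ≠ 0 := by
        intro hz
        exact hne ((reportPref r2).winj b _ _ (by rw [hz, hwb]))
      rw [hwb]
      exact Nat.pos_of_ne_zero hnz

lemma aBranch {P : Pref M W} {um : M → ℕ → ℝ} {uw : W → ℕ → ℝ}
    {Γ : (∀ i : M ⊕ W, Strat M W i) → Matching M W}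
    {H : ∀ i : M ⊕ W, Set (Strat M W i)} {μ : Matching M W}
    (hΓ : (∀ r, IsMOptimalStable (reportPref r) (Γ r)) ∨
          (∀ r, IsWOptimalStable (reportPref r) (Γ r)))
    (hpp : ∀ r : ∀ i : M ⊕ W, Strat M W i, (∀ i, r i ∈ H i) → Γ r = μ)
    (hcl : CUWBR (algPayoff Γ P um uw) H)
    (hum : ∀ a x y, x < y → um a y < um a x)
    (huw : ∀ b x y, x < y → uw b y < uw b x)
    {r0 : ∀ i : M ⊕ W, Strat M W i} (hr0 : ∀ i, r0 i ∈ H i) {a : M} {b : W}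
    (h1 : P.mrank a (some b) < P.mrank a (μ.mu a))
    (h2 : P.wrank b (some a) < P.wrank b (μ.nu b))
    (hnB : ¬ ((reportPref r0).wrank b (some a) < (reportPref r0).wrank b (μ.nu b))) :
    False := by
  have hstab : ∀ r, StableMatching (reportPref r) (Γ r) :=
    hΓ.elim (fun h r => (h r).1) (fun h r => (h r).1)
  have hμ0 : Γ r0 = μ := hpp r0 hr0
  have hst0 : StableMatching (reportPref r0) μ := hμ0 ▸ hstab r0
  have hxy : (some b : Option W) ≠ μ.mu a := by
    intro h; rw [← h] at h1; exact lt_irrefl _ h1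
  obtain ⟨ea, he0, he1, heN1, heNn, heNs, heF⟩ := exists_eDev hxy (by simp)
  have hst1 : StableMatching (reportPref (Function.update r0 (Sum.inl a) ea)) μ := by
    apply stable_upd_a hst0
    · rw [he1]
      omega
    · intro d hd
      rw [he1] at hd
      have hd0 : (ea (some d) : ℕ) = 0 := by omega
      have hdb : (some d : Option W) = some b := eq_of_val_eq ea (by rw [hd0, he0])
      have : d = b := by injection hdb
      subst this
      exact hnB
  have hself : (reportPref (Function.update r0 (Sum.inl a) ea)).mrank a (some b) = 0 := by
    rw [rank_upd_a_self]; exact he0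
  have hstν := hstab (Function.update r0 (Sum.inl a) ea)
  have forced : (Γ (Function.update r0 (Sum.inl a) ea)).mu a = some b ∨
      (Γ (Function.update r0 (Sum.inl a) ea)).mu a = μ.mu a := by
    rcases hΓ with hM | hW
    · have hopt := (hM (Function.update r0 (Sum.inl a) ea)).2 μ hst1 a
      rw [rank_upd_a_self, rank_upd_a_self, he1] at hopt
      rcases heF _ (le_trans hopt heN1) with h | h | h
      · exact Or.inl h
      · exact Or.inr h
      · by_cases hmu : μ.mu a = none
        · exact Or.inr (by rw [h, hmu])
        · exfalso
          rw [h, heNs hmu] at hopt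
          omega
    · have hIRν := hstν.1.1 a
      rw [rank_upd_a_self, rank_upd_a_self] at hIRν
      rcases heF _ (le_of_not_gt hIRν) with h | h | h
      · exact Or.inl h
      · exact Or.inr h
      · by_cases hmu : μ.mu a = none
        · exact Or.inr (by rw [h, hmu])
        · exfalso
          obtain ⟨b', hb'⟩ := Option.ne_none_iff_exists'.mp hmu
          exact lonewolf (StableMatching.flip hst1) (StableMatching.flip hstν)
            (fun d => (hW (Function.update r0 (Sum.inl a) ea)).2 μ hst1 d)
            (b := a) (a₀ := b') hb' h
  rcases forced with hcase | hcase
  · have hkey : ea ∈ H (Sum.inl a) := by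
      apply key_lemma hcl hr0
      rw [pay_m, pay_m, hμ0, hcase]
      exact le_of_lt (hum a _ _ h1)
    have hμ1 : Γ (Function.update r0 (Sum.inl a) ea) = μ := hpp _ (update_mem hr0 hkey)
    rw [hμ1] at hcase
    rw [hcase] at h1
    exact lt_irrefl _ h1
  · have hkey : ea ∈ H (Sum.inl a) := by
      apply key_lemma hcl hr0
      rw [pay_m, pay_m, hμ0, hcase]
    have hr1mem := update_mem hr0 hkey
    exact finalStep_a_first hstab hpp hcl huw hr1mem h2 hself

lemma bBranch {P : Pref M W} {um : M → ℕ → ℝ} {uw : W → ℕ → ℝ}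
    {Γ : (∀ i : M ⊕ W, Strat M W i) → Matching M W}
    {H : ∀ i : M ⊕ W, Set (Strat M W i)} {μ : Matching M W}
    (hΓ : (∀ r, IsMOptimalStable (reportPref r) (Γ r)) ∨
          (∀ r, IsWOptimalStable (reportPref r) (Γ r)))
    (hpp : ∀ r : ∀ i : M ⊕ W, Strat M W i, (∀ i, r i ∈ H i) → Γ r = μ)
    (hcl : CUWBR (algPayoff Γ P um uw) H)
    (hum : ∀ a x y, x < y → um a y < um a x)
    (huw : ∀ b x y, x < y → uw b y < uw b x)
    {r0 : ∀ i : M ⊕ W, Strat M W i} (hr0 : ∀ i, r0 i ∈ H i) {a : M} {b : W}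
    (h1 : P.mrank a (some b) < P.mrank a (μ.mu a))
    (h2 : P.wrank b (some a) < P.wrank b (μ.nu b))
    (hnA : ¬ ((reportPref r0).mrank a (some b) < (reportPref r0).mrank a (μ.mu a))) :
    False := by
  have hstab : ∀ r, StableMatching (reportPref r) (Γ r) :=
    hΓ.elim (fun h r => (h r).1) (fun h r => (h r).1)
  have hμ0 : Γ r0 = μ := hpp r0 hr0
  have hst0 : StableMatching (reportPref r0) μ := hμ0 ▸ hstab r0
  have hxy : (some a : Option M) ≠ μ.nu b := by
    intro h; rw [← h] at h2; exact lt_irrefl _ h2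
  obtain ⟨eb, he0, he1, heN1, heNn, heNs, heF⟩ := exists_eDev hxy (by simp)
  have hst1 : StableMatching (reportPref (Function.update r0 (Sum.inr b) eb)) μ := by
    apply stable_upd_b hst0
    · rw [he1]
      omega
    · intro c hc
      rw [he1] at hc
      have hc0 : (eb (some c) : ℕ) = 0 := by omega
      have hca : (some c : Option M) = some a := eq_of_val_eq eb (by rw [hc0, he0])
      have : c = a := by injection hca
      subst this
      exact hnA
  have hself : (reportPref (Function.update r0 (Sum.inr b) eb)).wrank b (some a) = 0 := by
    rw [rank_upd_b_self]; exact he0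
  have hstν := hstab (Function.update r0 (Sum.inr b) eb)
  have forced : (Γ (Function.update r0 (Sum.inr b) eb)).nu b = some a ∨
      (Γ (Function.update r0 (Sum.inr b) eb)).nu b = μ.nu b := by
    rcases hΓ with hM | hW
    · have hIRν := hstν.1.2 b
      rw [rank_upd_b_self, rank_upd_b_self] at hIRν
      rcases heF _ (le_of_not_gt hIRν) with h | h | h
      · exact Or.inl h
      · exact Or.inr h
      · by_cases hnu : μ.nu b = none
        · exact Or.inr (by rw [h, hnu])
        · exfalso
          obtain ⟨a', ha'⟩ := Option.ne_none_iff_exists'.mp hnu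
          exact lonewolf hst1 hstν
            (fun c => (hM (Function.update r0 (Sum.inr b) eb)).2 μ hst1 c)
            (b := b) (a₀ := a') ha' h
    · have hopt := (hW (Function.update r0 (Sum.inr b) eb)).2 μ hst1 b
      rw [rank_upd_b_self, rank_upd_b_self, he1] at hopt
      rcases heF _ (le_trans hopt heN1) with h | h | h
      · exact Or.inl h
      · exact Or.inr h
      · by_cases hnu : μ.nu b = none
        · exact Or.inr (by rw [h, hnu])
        · exfalso
          rw [h, heNs hnu] at hopt
          omega
  rcases forced with hcase | hcase
  · have hkey : eb ∈ H (Sum.inr b) := by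
      apply key_lemma hcl hr0
      rw [pay_w, pay_w, hμ0, hcase]
      exact le_of_lt (huw b _ _ h2)
    have hμ1 : Γ (Function.update r0 (Sum.inr b) eb) = μ := hpp _ (update_mem hr0 hkey)
    rw [hμ1] at hcase
    rw [hcase] at h2
    exact lt_irrefl _ h2
  · have hkey : eb ∈ H (Sum.inr b) := by
      apply key_lemma hcl hr0
      rw [pay_w, pay_w, hμ0, hcase]
    have hr1mem := update_mem hr0 hkey
    exact finalStep_b_first hstab hpp hcl hum hr1mem h1 hself

end MainAux

/-- Under an M-optimal (or W-optimal) stable matching algorithm,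
any matching that is asymptotically stable under payoff-positive selection
dynamics — i.e. that admits a (nonempty) partial preimage closed under weakly
better replies — is a stable matching with respect to the true preferences. -/
theorem asymptotically_stable_is_stable {M W : Type} [Fintype M] [Fintype W]
    [DecidableEq M] [DecidableEq W] (P : Pref M W)
    (um : M → ℕ → ℝ) (uw : W → ℕ → ℝ)
    (hum : ∀ a x y, x < y → um a y < um a x)
    (huw : ∀ b x y, x < y → uw b y < uw b x)
    (Γ : (∀ i : M ⊕ W, Strat M W i) → Matching M W)
    (hΓ : (∀ r, IsMOptimalStable (reportPref r) (Γ r)) ∨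
          (∀ r, IsWOptimalStable (reportPref r) (Γ r)))
    (μ : Matching M W) (H : ∀ i : M ⊕ W, Set (Strat M W i))
    (hpp : ∀ r : ∀ i : M ⊕ W, Strat M W i, (∀ i, r i ∈ H i) → Γ r = μ)
    (hne : ∃ r : ∀ i : M ⊕ W, Strat M W i, ∀ i, r i ∈ H i)
    (hcl : CUWBR (algPayoff Γ P um uw) H) :
    StableMatching P μ := by
  classical
  obtain ⟨r0, hr0⟩ := hne
  have hstab : ∀ r, StableMatching (reportPref r) (Γ r) :=
    hΓ.elim (fun h r => (h r).1) (fun h r => (h r).1)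
  have hμ0 : Γ r0 = μ := hpp r0 hr0
  have hst0 : StableMatching (reportPref r0) μ := hμ0 ▸ hstab r0
  refine ⟨⟨fun a => ?_, fun b => ?_⟩, fun a b => ?_⟩
  · intro hbad
    obtain ⟨e, he⟩ := exists_e1 (none : Option W)
    have hIR := (hstab (Function.update r0 (Sum.inl a) e)).1.1 a
    rw [rank_upd_a_self, rank_upd_a_self, he] at hIR
    have hz : (e ((Γ (Function.update r0 (Sum.inl a) e)).mu a) : ℕ) = 0 := by omega
    have hnone : (Γ (Function.update r0 (Sum.inl a) e)).mu a = none :=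
      eq_of_val_eq e (by rw [hz, he])
    have hkey : e ∈ H (Sum.inl a) := by
      apply key_lemma hcl hr0
      rw [pay_m, pay_m, hμ0, hnone]
      exact le_of_lt (hum a _ _ hbad)
    have hμ1 : Γ (Function.update r0 (Sum.inl a) e) = μ := hpp _ (update_mem hr0 hkey)
    rw [hμ1] at hnone
    rw [hnone] at hbad
    exact lt_irrefl _ hbad
  · intro hbad
    obtain ⟨e, he⟩ := exists_e1 (none : Option M)
    have hIR := (hstab (Function.update r0 (Sum.inr b) e)).1.2 b
    rw [rank_upd_b_self, rank_upd_b_self, he] at hIR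
    have hz : (e ((Γ (Function.update r0 (Sum.inr b) e)).nu b) : ℕ) = 0 := by omega
    have hnone : (Γ (Function.update r0 (Sum.inr b) e)).nu b = none :=
      eq_of_val_eq e (by rw [hz, he])
    have hkey : e ∈ H (Sum.inr b) := by
      apply key_lemma hcl hr0
      rw [pay_w, pay_w, hμ0, hnone]
      exact le_of_lt (huw b _ _ hbad)
    have hμ1 : Γ (Function.update r0 (Sum.inr b) e) = μ := hpp _ (update_mem hr0 hkey)
    rw [hμ1] at hnone
    rw [hnone] at hbad
    exact lt_irrefl _ hbad
  · rintro ⟨h1, h2⟩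
    by_cases hB : (reportPref r0).wrank b (some a) < (reportPref r0).wrank b (μ.nu b)
    · have hnA : ¬ ((reportPref r0).mrank a (some b) < (reportPref r0).mrank a (μ.mu a)) :=
        fun hA => hst0.2 a b ⟨hA, hB⟩
      exact bBranch hΓ hpp hcl hum huw hr0 h1 h2 hnA
    · exact aBranch hΓ hpp hcl hum huw hr0 h1 h2 hB
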